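/- arXiv:1807.05458 — 3 statements merged into one kernel-verified Lean document; each statement's English description precedes it below -/
import Mathlib

section
/- Let A ⊆ ℝ be a dense subset, f : A → ℂ a bounded function, and suppose there exist continuous functions f₂, f₃ : ℝ → ℂ with f₂|_A = f² and f₃|_A = f³. Define f̃ : ℝ → ℂ by f̃(α) = f₃(α)/f₂(α) if f₂(α) ≠ 0 and f̃(α) = 0 otherwise. Then f̃ is continuous on ℝ and f̃|_A = f. -/
open scoped Classical

theorem stmt_6 (A : Set ℝ) (hA : Dense A) (f f₂ f₃ : ℝ → ℂ)
    (hbd : ∃ M : ℝ, ∀ x ∈ A, ‖f x‖ ≤ M)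
    (h₂ : Continuous f₂) (h₃ : Continuous f₃)
    (hf₂ : ∀ x ∈ A, f₂ x = (f x) ^ 2) (hf₃ : ∀ x ∈ A, f₃ x = (f x) ^ 3) :
    Continuous (fun α => if f₂ α = 0 then 0 else f₃ α / f₂ α) ∧
      ∀ x ∈ A, (if f₂ x = 0 then 0 else f₃ x / f₂ x) = f x := by
  -- f₃² = f₂³ everywhere by density
  have key : ∀ x, f₃ x ^ 2 = f₂ x ^ 3 := by
    have heq : (fun x => f₃ x ^ 2) = fun x => f₂ x ^ 3 := by
      apply Continuous.ext_on hA (h₃.pow 2) (h₂.pow 3)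
      intro x hx
      show f₃ x ^ 2 = f₂ x ^ 3
      simp only [hf₂ x hx, hf₃ x hx]
      ring
    exact fun x => congrFun heq x
  have normkey : ∀ x, ‖f₃ x‖ ^ 2 = ‖f₂ x‖ ^ 3 := by
    intro x
    calc ‖f₃ x‖ ^ 2 = ‖f₃ x ^ 2‖ := by rw [norm_pow]
    _ = ‖f₂ x ^ 3‖ := by rw [key]
    _ = ‖f₂ x‖ ^ 3 := norm_pow _ _
  -- norm bound
  have hbound : ∀ x, ‖(if f₂ x = 0 then (0 : ℂ) else f₃ x / f₂ x)‖ ≤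
      Real.sqrt ‖f₂ x‖ := by
    intro x
    by_cases h : f₂ x = 0
    · simp [h, Real.sqrt_nonneg]
    · rw [if_neg h, norm_div]
      have hpos : 0 < ‖f₂ x‖ := norm_pos_iff.mpr h
      have hsq : (‖f₃ x‖ / ‖f₂ x‖) ^ 2 = ‖f₂ x‖ := by
        rw [div_pow, normkey, pow_succ, mul_comm, mul_div_assoc,
          div_self (pow_ne_zero 2 hpos.ne'), mul_one]
      have hs : Real.sqrt ‖f₂ x‖ = ‖f₃ x‖ / ‖f₂ x‖ := by
        conv_lhs => rw [← hsq]
        exact Real.sqrt_sq (by positivity)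
      rw [hs]
  constructor
  · rw [continuous_iff_continuousAt]
    intro α
    by_cases h : f₂ α = 0
    · have hval : (if f₂ α = 0 then (0 : ℂ) else f₃ α / f₂ α) = 0 := if_pos h
      have htz : Filter.Tendsto (fun x => if f₂ x = 0 then (0 : ℂ) else f₃ x / f₂ x)
          (nhds α) (nhds 0) := by
        apply squeeze_zero_norm hbound
        have hts : Filter.Tendsto (fun x => Real.sqrt ‖f₂ x‖) (nhds α)
            (nhds (Real.sqrt ‖f₂ α‖)) :=
          (Real.continuous_sqrt.comp (h₂.norm)).continuousAt
        rwa [h, norm_zero, Real.sqrt_zero] at hts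
      simpa [ContinuousAt, hval] using htz
    · have hopen : IsOpen {x | f₂ x ≠ 0} := isOpen_compl_singleton.preimage h₂
      have hev : ∀ᶠ x in nhds α, f₂ x ≠ 0 := hopen.mem_nhds h
      apply ContinuousAt.congr ((h₃.continuousAt).div (h₂.continuousAt) h)
      filter_upwards [hev] with x hx
      simp [if_neg hx]
  · intro x hx
    by_cases h : f₂ x = 0
    · rw [if_pos h]
      have : f x ^ 2 = 0 := (hf₂ x hx) ▸ h
      have := pow_eq_zero_iff (n := 2) (by norm_num) |>.mp this
      exact this.symm
    · rw [if_neg h, hf₃ x hx, hf₂ x hx]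
      have hfx : f x ≠ 0 := fun hz => h (by rw [hf₂ x hx, hz]; ring)
      field_simp
end

section
/- Let G : P₋ → ℂ be holomorphic on the lower half-plane and suppose there is C > 0 such that |G'(x+iy)| ≤ C for all x ∈ ℝ, y < 0. Suppose further that G(iy) → 0 as y → 0⁻. Then for every δ > 0, lim_{y → 0⁻} ∫_{-δ}^{δ} 1/|G(s+iy)|² ds = ∞, provided G(s+iy) ≠ 0 on the relevant strip so the integrand is defined (interpreting 1/|G|² = +∞ where G = 0). -/
open Filter Set MeasureTheory

lemma stmt_7_mvt (G : ℂ → ℂ) (hG : DifferentiableOn ℂ G {z : ℂ | z.im < 0})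
    (C : ℝ)
    (hG' : ∀ x : ℝ, ∀ y < (0:ℝ), ‖deriv G (↑x + ↑y * Complex.I)‖ ≤ C)
    {z w : ℂ} (hz : z.im < 0) (hw : w.im < 0) :
    ‖G w - G z‖ ≤ C * ‖w - z‖ := by
  have hopen : IsOpen {z : ℂ | z.im < 0} :=
    isOpen_Iio.preimage Complex.continuous_im
  refine Convex.norm_image_sub_le_of_norm_hasDerivWithin_le
    (f' := fun z => deriv G z) (fun x hx => ?_) (fun x hx => ?_)
    (convex_halfSpace_im_lt 0) hz hw
  · exact ((hG.differentiableAt (hopen.mem_nhds hx)).hasDerivAt).hasDerivWithinAt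
  · have := hG' x.re x.im hx
    rwa [Complex.re_add_im] at this

theorem stmt_7 (G : ℂ → ℂ) (hG : DifferentiableOn ℂ G {z : ℂ | z.im < 0})
    (C : ℝ) (hC : 0 < C)
    (hG' : ∀ x : ℝ, ∀ y < (0:ℝ), ‖deriv G (↑x + ↑y * Complex.I)‖ ≤ C)
    (h0 : Tendsto (fun y : ℝ => G (↑y * Complex.I)) (nhdsWithin 0 (Iio 0)) (nhds 0)) :
    ∀ δ > (0:ℝ), Tendsto (fun y : ℝ =>
        ∫⁻ s in Ioo (-δ) δ, (ENNReal.ofReal (‖G (↑s + ↑y * Complex.I)‖ ^ 2))⁻¹)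
      (nhdsWithin 0 (Iio 0)) (nhds ⊤) := by
  intro δ hδ
  refine ENNReal.tendsto_nhds_top fun n => ?_
  -- choose small t
  set t : ℝ := min (δ / 2) (1 / (9 * C ^ 2 * (n + 1))) with ht_def
  have hCn : 0 < 9 * C ^ 2 * (n + 1) := by positivity
  have ht : 0 < t := lt_min (by linarith) (by positivity)
  have ht2 : 2 * t ≤ δ := by
    have := min_le_left (δ / 2) (1 / (9 * C ^ 2 * (n + 1)))
    rw [← ht_def] at this; linarith
  have htn : (n : ℝ) + 1 ≤ 1 / (9 * C ^ 2 * t) := by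
    have h1 : t ≤ 1 / (9 * C ^ 2 * (n + 1)) := min_le_right _ _
    rw [le_div_iff₀ (by positivity)]
    calc ((n : ℝ) + 1) * (9 * C ^ 2 * t)
        ≤ ((n : ℝ) + 1) * (9 * C ^ 2 * (1 / (9 * C ^ 2 * (n + 1)))) := by
          have : (0:ℝ) < (n:ℝ) + 1 := by positivity
          gcongr
      _ = 1 := by field_simp
  -- eventually ‖G(iy)‖ ≤ C * t and y < 0
  have hev : ∀ᶠ y : ℝ in nhdsWithin 0 (Iio 0),
      ‖G (↑y * Complex.I)‖ ≤ C * t ∧ y < 0 := by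
    filter_upwards [h0 (Metric.closedBall_mem_nhds 0 (by positivity : (0:ℝ) < C * t)),
      self_mem_nhdsWithin] with y hy hy'
    refine ⟨?_, hy'⟩
    simpa [Metric.mem_closedBall, dist_eq_norm] using hy
  filter_upwards [hev] with y hy
  obtain ⟨hGy, hy0⟩ := hy
  -- pointwise bound on Ioo t (2*t)
  have hbound : ∀ s ∈ Ioo t (2 * t),
      (ENNReal.ofReal ((3 * C * t) ^ 2))⁻¹
        ≤ (ENNReal.ofReal (‖G (↑s + ↑y * Complex.I)‖ ^ 2))⁻¹ := by
    intro s hs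
    have him1 : ((s : ℂ) + ↑y * Complex.I).im < 0 := by
      simpa [Complex.add_im] using hy0
    have him2 : ((y : ℝ) * Complex.I : ℂ).im < 0 := by simpa using hy0
    have hmvt := stmt_7_mvt G hG C hG' him2 him1
    have hnorm : ‖((s : ℂ) + ↑y * Complex.I) - ↑y * Complex.I‖ = |s| := by
      simp [Complex.norm_real]
    rw [hnorm] at hmvt
    have habs : |s| = s := abs_of_pos (lt_trans ht hs.1)
    have hle : ‖G (↑s + ↑y * Complex.I)‖ ≤ 3 * C * t := by
      have h1 : ‖G (↑s + ↑y * Complex.I)‖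
          ≤ ‖G (↑y * Complex.I)‖ + C * s := by
        have := norm_sub_norm_le (G (↑s + ↑y * Complex.I)) (G (↑y * Complex.I))
        rw [habs] at hmvt; linarith
      have hs2 : s ≤ 2 * t := le_of_lt hs.2
      have : C * s ≤ C * (2 * t) := by gcongr
      linarith
    apply ENNReal.inv_le_inv.mpr
    apply ENNReal.ofReal_le_ofReal
    have h3 : (0:ℝ) ≤ 3 * C * t := by positivity
    exact pow_le_pow_left₀ (norm_nonneg _) hle 2
  -- the integral bound
  have hsub : Ioo t (2 * t) ⊆ Ioo (-δ) δ := by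
    intro s hs
    constructor
    · linarith [hs.1]
    · linarith [hs.2]
  have hmain : (ENNReal.ofReal ((3 * C * t) ^ 2))⁻¹ * ENNReal.ofReal t
      ≤ ∫⁻ s in Ioo (-δ) δ, (ENNReal.ofReal (‖G (↑s + ↑y * Complex.I)‖ ^ 2))⁻¹ := by
    have h1 : (∫⁻ s in Ioo t (2 * t), (ENNReal.ofReal ((3 * C * t) ^ 2))⁻¹)
        ≤ ∫⁻ s in Ioo t (2 * t),
            (ENNReal.ofReal (‖G (↑s + ↑y * Complex.I)‖ ^ 2))⁻¹ :=
      setLIntegral_mono' measurableSet_Ioo hbound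
    have h2 : (∫⁻ s in Ioo t (2 * t),
            (ENNReal.ofReal (‖G (↑s + ↑y * Complex.I)‖ ^ 2))⁻¹)
        ≤ ∫⁻ s in Ioo (-δ) δ,
            (ENNReal.ofReal (‖G (↑s + ↑y * Complex.I)‖ ^ 2))⁻¹ :=
      lintegral_mono_set hsub
    calc (ENNReal.ofReal ((3 * C * t) ^ 2))⁻¹ * ENNReal.ofReal t
        = ∫⁻ _ in Ioo t (2 * t), (ENNReal.ofReal ((3 * C * t) ^ 2))⁻¹ := by
          rw [setLIntegral_const, Real.volume_Ioo]
          congr 1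
          congr 1
          ring
      _ ≤ _ := le_trans h1 h2
  refine lt_of_lt_of_le ?_ hmain
  have heq : (ENNReal.ofReal ((3 * C * t) ^ 2))⁻¹ * ENNReal.ofReal t
      = ENNReal.ofReal (t / (3 * C * t) ^ 2) := by
    rw [ENNReal.ofReal_div_of_pos (by positivity), div_eq_mul_inv, mul_comm]
  rw [heq]
  have heq2 : t / (3 * C * t) ^ 2 = 1 / (9 * C ^ 2 * t) := by
    field_simp
    ring
  rw [heq2]
  calc (n : ENNReal) < ENNReal.ofReal ((n : ℝ) + 1) := by
        rw [← ENNReal.ofReal_natCast n]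
        exact ENNReal.ofReal_lt_ofReal_iff (by positivity) |>.mpr (by linarith)
    _ ≤ ENNReal.ofReal (1 / (9 * C ^ 2 * t)) := ENNReal.ofReal_le_ofReal htn
end

section
/- Let z : ℝ × [0,T] → ℂ satisfy: z(·,0) is absolutely continuous with derivative Z_{,α'}(·,0) ∈ L¹_loc, and for all t ∈ [0,T] and α < β, ||z(α,t) - z(β,t)| - |z(α,0) - z(β,0)|| ≤ tC ∫_α^β |Z_{,α'}(γ,0)| dγ for some constant C > 0. Suppose the initial curve satisfies the chord-arc condition δ∫_α^β |Z_{,α'}(γ,0)| dγ ≤ |z(α,0) - z(β,0)| for some 0 < δ < 1 and all α < β. Then for all t ∈ [0, min(T, δ/(2C))] and all α < β, (δ/2)∫_α^β |Z_{,α'}(γ,0)| dγ ≤ |z(α,t) - z(β,t)| ≤ 2∫_α^β |Z_{,α'}(γ,0)| dγ. In particular z(·,t) is injective and absolutely continuous. -/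
open Set

theorem stmt_14 (T C δ : ℝ) (hT : 0 ≤ T) (hC : 0 < C) (hδ₀ : 0 < δ) (hδ₁ : δ < 1)
    (z : ℝ → ℝ → ℂ) (Z' : ℝ → ℂ)
    (hloc : MeasureTheory.LocallyIntegrable Z' MeasureTheory.volume)
    (hpert : ∀ t ∈ Icc 0 T, ∀ α β : ℝ, α ≤ β →
      |‖z α t - z β t‖ - ‖z α 0 - z β 0‖| ≤ t * C * ∫ γ in α..β, ‖Z' γ‖)
    (hca : ∀ α β : ℝ, α ≤ β →
      δ * (∫ γ in α..β, ‖Z' γ‖) ≤ ‖z α 0 - z β 0‖ ∧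
        ‖z α 0 - z β 0‖ ≤ ∫ γ in α..β, ‖Z' γ‖)
    (hinj : Function.Injective fun α => z α 0) :
    ∀ t ∈ Icc 0 (min T (δ / (2 * C))),
      (∀ α β : ℝ, α ≤ β →
        (δ / 2) * (∫ γ in α..β, ‖Z' γ‖) ≤ ‖z α t - z β t‖ ∧
          ‖z α t - z β t‖ ≤ 2 * ∫ γ in α..β, ‖Z' γ‖) ∧
      Function.Injective fun α => z α t := by
  intro t ht
  obtain ⟨ht0, htm⟩ := ht
  have htT : t ≤ T := le_trans htm (min_le_left _ _)
  have htδ : t ≤ δ / (2 * C) := le_trans htm (min_le_right _ _)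
  have key : ∀ α β : ℝ, α ≤ β →
      (δ / 2) * (∫ γ in α..β, ‖Z' γ‖) ≤ ‖z α t - z β t‖ ∧
        ‖z α t - z β t‖ ≤ 2 * ∫ γ in α..β, ‖Z' γ‖ := by
    intro α β hαβ
    set I := ∫ γ in α..β, ‖Z' γ‖ with hI
    have hInn : 0 ≤ I := intervalIntegral.integral_nonneg hαβ (fun u _ => norm_nonneg _)
    have hp := hpert t ⟨ht0, htT⟩ α β hαβ
    have hc := hca α β hαβ
    have htC : t * C * I ≤ (δ / 2) * I := by
      have h1 : t * C ≤ δ / 2 := by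
        have := (div_le_iff₀ (by positivity : (0:ℝ) < 2 * C)).mp (le_refl (δ / (2 * C)))
        calc t * C ≤ (δ / (2 * C)) * C := by nlinarith
          _ = δ / 2 := by field_simp
      nlinarith
    have habs := abs_le.mp hp
    constructor
    · nlinarith [hc.1, habs.1]
    · nlinarith [hc.2, habs.2, hδ₁.le]
  refine ⟨key, ?_⟩
  intro a b hab
  simp only at hab
  rcases le_total a b with h | h
  · have hk := (key a b h).1
    rw [hab, sub_self, norm_zero] at hk
    have hInn : 0 ≤ ∫ γ in a..b, ‖Z' γ‖ :=
      intervalIntegral.integral_nonneg h (fun u _ => norm_nonneg _)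
    have hIz : (∫ γ in a..b, ‖Z' γ‖) = 0 := by nlinarith
    have := (hca a b h).2
    rw [hIz] at this
    have : z a 0 = z b 0 := by
      have := le_antisymm this (norm_nonneg _)
      exact sub_eq_zero.mp (norm_eq_zero.mp this)
    exact hinj this
  · have hk := (key b a h).1
    rw [hab, sub_self, norm_zero] at hk
    have hInn : 0 ≤ ∫ γ in b..a, ‖Z' γ‖ :=
      intervalIntegral.integral_nonneg h (fun u _ => norm_nonneg _)
    have hIz : (∫ γ in b..a, ‖Z' γ‖) = 0 := by nlinarith
    have := (hca b a h).2
    rw [hIz] at this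
    have : z b 0 = z a 0 := by
      have := le_antisymm this (norm_nonneg _)
      exact sub_eq_zero.mp (norm_eq_zero.mp this)
    exact (hinj this).symm
end
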